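/- For n ≥ 1 let W_n = ⟨x₁, ..., x_n | x_i² = 1⟩ be the universal Coxeter group of rank n, i.e. the free product of n copies of Z/2Z. Then Out(W_n) virtually embeds in Out(W_{n+1}): there exist a finite-index subgroup O ≤ Out(W_n) and an injective group homomorphism O → Out(W_{n+1}). -/

import Mathlib

section Defs

variable (G : Type*) [Group G]

/-- The subgroup of inner automorphisms of `G`. -/
def Inn : Subgroup (MulAut G) := (MulAut.conj : G →* MulAut G).range

instance Inn.normal : (Inn G).Normal := by
  constructor
  intro n hn φ
  obtain ⟨g, rfl⟩ := hn
  refine ⟨φ g, ?_⟩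
  ext x
  simp only [MulAut.conj_apply, MulAut.mul_apply, map_mul, map_inv, MulAut.inv_def,
    MulEquiv.apply_symm_apply]

/-- The outer automorphism group `Out(G) = Aut(G)/Inn(G)`. -/
def Out := MulAut G ⧸ Inn G

instance : Group (Out G) := inferInstanceAs (Group (MulAut G ⧸ Inn G))

/-- The canonical projection `Aut(G) → Out(G)`. -/
def outProj : MulAut G →* Out G := QuotientGroup.mk' (Inn G)

/-- A surjective homomorphism `f : A → B` splits virtually if it admits a section on some
finite-index subgroup of `B`. -/
def SplitsVirtually {A B : Type*} [Group A] [Group B] (f : A →* B) : Prop :=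
  ∃ B' : Subgroup B, B'.FiniteIndex ∧ ∃ s : (↥B') →* A, ∀ x : B', f (s x) = (x : B)

/-- A group is residually finite if every nontrivial element survives in some finite quotient. -/
def ResiduallyFinite (G : Type*) [Group G] : Prop :=
  ∀ g : G, g ≠ 1 → ∃ (F : Type) (_ : Group F) (_ : Finite F) (φ : G →* F), φ g ≠ 1

/-- A group is residually `p` if every nontrivial element survives in some finite `p`-group
quotient. -/
def ResiduallyP (p : ℕ) (G : Type*) [Group G] : Prop :=
  ∀ g : G, g ≠ 1 →
    ∃ (F : Type) (_ : Group F) (_ : Finite F) (φ : G →* F), IsPGroup p F ∧ φ g ≠ 1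

/-- A group is virtually residually `p` if some finite-index subgroup is residually `p`. -/
def VirtuallyResiduallyP (p : ℕ) (G : Type*) [Group G] : Prop :=
  ∃ K : Subgroup G, K.FiniteIndex ∧ ResiduallyP p ↥K

/-- `Aut_{H̲}(G)`: the subgroup of automorphisms of `G` fixing `H` pointwise. -/
def autFix (H : Subgroup G) : Subgroup (MulAut G) where
  carrier := {φ | ∀ h ∈ H, φ h = h}
  one_mem' := fun _ _ => rfl
  mul_mem' := by
    intro a b ha hb h hh
    show a (b h) = h
    rw [hb h hh, ha h hh]
  inv_mem' := by
    intro a ha h hh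
    show a⁻¹ h = h
    calc a⁻¹ h = a⁻¹ (a h) := by rw [ha h hh]
    _ = h := by rw [MulAut.inv_def]; exact a.symm_apply_apply h

/-- `Aut_H(G)`: the subgroup of automorphisms of `G` mapping `H` onto itself. -/
def autSetwise (H : Subgroup G) : Subgroup (MulAut G) where
  carrier := {φ | ∀ g : G, φ g ∈ H ↔ g ∈ H}
  one_mem' := fun _ => Iff.rfl
  mul_mem' := by
    intro a b ha hb g
    show a (b g) ∈ H ↔ g ∈ H
    rw [ha, hb]
  inv_mem' := by
    intro a ha g
    show a⁻¹ g ∈ H ↔ g ∈ H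
    have h1 : a (a⁻¹ g) = g := by rw [MulAut.inv_def]; exact a.apply_symm_apply g
    have := ha (a⁻¹ g)
    rw [h1] at this
    exact this.symm

theorem mem_autSetwise {H : Subgroup G} {φ : MulAut G} :
    φ ∈ autSetwise G H ↔ ∀ g : G, φ g ∈ H ↔ g ∈ H := Iff.rfl

/-- `H` is an Aut-splitting subgroup of `G` if the restriction of `Aut(G) → Out(G)` to
`Aut_{H̲}(G)` has finite kernel and an image of finite index in `Out(G)`. -/
def IsAutSplitting (H : Subgroup G) : Prop :=
  Finite ((outProj G).comp (autFix G H).subtype).ker ∧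
    ((autFix G H).map (outProj G)).FiniteIndex

/-- The conjugate `gKg⁻¹` of a subgroup. -/
def conjSubgroup (g : G) (K : Subgroup G) : Subgroup G :=
  K.map (MulAut.conj g).toMonoidHom

end Defs

/-- The universal Coxeter group `W_n = ⟨x₁, …, x_n ∣ x_i² = 1⟩`, the free product of `n` copies
of `ℤ/2ℤ`. -/
abbrev UniversalCoxeterGroup (n : ℕ) : Type :=
  PresentedGroup (Set.range (fun i : Fin n => FreeGroup.of i ^ 2))

namespace S19

open List

abbrev W (m : ℕ) := UniversalCoxeterGroup m

def xg {m : ℕ} (i : Fin m) : W m := PresentedGroup.of i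

lemma xg_sq {m : ℕ} (i : Fin m) : xg i * xg i = 1 := by
  have h : (PresentedGroup.mk _ (FreeGroup.of i ^ 2) : W m) = 1 := by
    apply (QuotientGroup.eq_one_iff _).mpr
    exact Subgroup.subset_normalClosure ⟨i, rfl⟩
  rwa [pow_two, map_mul] at h

lemma xg_inv {m : ℕ} (i : Fin m) : (xg i)⁻¹ = xg i :=
  inv_eq_of_mul_eq_one_right (xg_sq i)

/-- Reduced words over `Fin m`. -/
def Red (m : ℕ) : Type := {l : List (Fin m) // l.Chain' (· ≠ ·)}

def sigFun {m : ℕ} (i : Fin m) (l : Red m) : Red m :=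
  if h : l.1.head? = some i then ⟨l.1.tail, l.2.tail⟩
  else ⟨i :: l.1, l.2.cons (by
    intro y hy hiy
    exact h (by rwa [← hiy] at hy))⟩

lemma sigFun_invol {m : ℕ} (i : Fin m) : Function.Involutive (sigFun i) := by
  rintro ⟨l, hl⟩
  by_cases h : l.head? = some i
  · match l, hl, h with
    | a :: t, hl, h =>
      have ha : a = i := by simpa using h
      subst ha
      have h1 : sigFun a ⟨a :: t, hl⟩ = ⟨t, hl.tail⟩ := dif_pos rfl
      rw [h1]
      have ht : t.head? ≠ some a := by
        match t, hl with
        | [], _ => simp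
        | b :: t', hl => simpa using Ne.symm (isChain_cons_cons.mp hl).1
      have h2 : sigFun a ⟨t, hl.tail⟩ = ⟨a :: t, _⟩ := dif_neg ht
      rw [h2]
  · have h1 : sigFun i ⟨l, hl⟩ = ⟨i :: l, _⟩ := dif_neg h
    rw [h1]
    exact dif_pos rfl

def sigma {m : ℕ} (i : Fin m) : Equiv.Perm (Red m) :=
  Function.Involutive.toPerm _ (sigFun_invol i)

lemma sigma_apply {m : ℕ} (i : Fin m) (l : Red m) : sigma i l = sigFun i l := rfl

lemma sigma_sq {m : ℕ} (i : Fin m) : sigma i * sigma i = 1 := by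
  ext l
  simp only [Equiv.Perm.mul_apply, Equiv.Perm.one_apply, sigma_apply]
  exact sigFun_invol i l

def rho {m : ℕ} : W m →* Equiv.Perm (Red m) :=
  PresentedGroup.toGroup (f := sigma) (by
    rintro r ⟨i, rfl⟩
    rw [map_pow, FreeGroup.lift_apply_of, pow_two]
    exact sigma_sq i)

lemma rho_xg {m : ℕ} (i : Fin m) : rho (xg i) = sigma i :=
  PresentedGroup.toGroup.of _

def nf {m : ℕ} (w : W m) : Red m := rho w ⟨[], isChain_nil⟩

def ev {m : ℕ} (l : List (Fin m)) : W m := (l.map xg).prod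

@[simp] lemma ev_nil {m : ℕ} : ev ([] : List (Fin m)) = 1 := rfl

lemma ev_cons {m : ℕ} (a : Fin m) (l : List (Fin m)) : ev (a :: l) = xg a * ev l := by
  simp [ev]

lemma ev_append {m : ℕ} (l₁ l₂ : List (Fin m)) : ev (l₁ ++ l₂) = ev l₁ * ev l₂ := by
  simp [ev]

lemma ev_singleton {m : ℕ} (a : Fin m) : ev [a] = xg a := by simp [ev]

lemma sigma_cons {m : ℕ} (i : Fin m) (t : Red m) (h : (i :: t.1).Chain' (· ≠ ·)) :
    sigma i t = ⟨i :: t.1, h⟩ := by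
  rw [sigma_apply]
  apply dif_neg
  intro hh
  have := (isChain_cons.mp h).1
  match t, hh with
  | ⟨a :: t', _⟩, hh =>
    have ha : a = i := by simpa using hh
    exact (this a (by simp)) ha.symm

lemma sigma_uncons {m : ℕ} (i : Fin m) (t : List (Fin m)) (h : (i :: t).Chain' (· ≠ ·)) :
    sigma i ⟨i :: t, h⟩ = ⟨t, h.tail⟩ := by
  show sigFun _ _ = _
  exact dif_pos rfl

lemma rho_ev_append {m : ℕ} :
    ∀ (l l₂ : List (Fin m)) (h : (l ++ l₂).Chain' (· ≠ ·)) (h₂ : l₂.Chain' (· ≠ ·)),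
      rho (ev l) ⟨l₂, h₂⟩ = ⟨l ++ l₂, h⟩
  | [], l₂, h, h₂ => by simp; rfl
  | a :: l, l₂, h, h₂ => by
    rw [ev_cons, map_mul]
    show rho (xg a) (rho (ev l) ⟨l₂, h₂⟩) = _
    rw [rho_ev_append l l₂ h.tail h₂, rho_xg]
    exact sigma_cons a ⟨l ++ l₂, h.tail⟩ h

lemma nf_ev {m : ℕ} (l : List (Fin m)) (h : l.Chain' (· ≠ ·)) : nf (ev l) = ⟨l, h⟩ := by
  have := rho_ev_append l [] (by simpa using h) isChain_nil
  simpa [nf] using this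

lemma ev_sigma {m : ℕ} (i : Fin m) (t : Red m) : ev (sigma i t).1 = xg i * ev t.1 := by
  rcases t with ⟨l, hl⟩
  by_cases h : l.head? = some i
  · match l, hl, h with
    | a :: t', hl, h =>
      have ha : a = i := by simpa using h
      subst ha
      rw [sigma_uncons a t' hl, ev_cons, ← mul_assoc, xg_sq, one_mul]
  · have h1 : sigma i ⟨l, hl⟩ = ⟨i :: l, _⟩ := dif_neg h
    rw [h1, ev_cons]

lemma nf_mul_xg_left {m : ℕ} (i : Fin m) (w : W m) : nf (xg i * w) = sigma i (nf w) := by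
  simp [nf, map_mul, Equiv.Perm.mul_apply, rho_xg]; rfl

lemma ev_nf {m : ℕ} (w : W m) : ev (nf w).1 = w := by
  have hw : w ∈ Subgroup.closure (Set.range (PresentedGroup.of :
      Fin m → W m)) := by
    rw [PresentedGroup.closure_range_of]; trivial
  induction hw using Subgroup.closure_induction_left with
  | one => simp [nf]; rfl
  | mul_left a ha y hy ih =>
    obtain ⟨i, rfl⟩ := ha
    have : (PresentedGroup.of i : W m) = xg i := rfl
    rw [this, nf_mul_xg_left, ev_sigma, ih]
  | inv_mul_cancel a ha y hy ih =>
    obtain ⟨i, rfl⟩ := ha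
    have : (PresentedGroup.of i : W m)⁻¹ = xg i := xg_inv i
    rw [this, nf_mul_xg_left, ev_sigma, ih]

lemma nf_one {m : ℕ} : (nf (1 : W m)).1 = [] := by simp [nf]; rfl

lemma eq_one_of_nf {m : ℕ} {w : W m} (h : (nf w).1 = []) : w = 1 := by
  have := ev_nf w
  rw [h] at this
  simpa using this.symm

lemma nf_xg {m : ℕ} (i : Fin m) : (nf (xg i)).1 = [i] := by
  have : nf (ev [i]) = ⟨[i], isChain_singleton i⟩ := nf_ev _ _
  rw [ev_singleton] at this
  rw [this]

lemma xg_ne_one {m : ℕ} (i : Fin m) : xg i ≠ 1 := by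
  intro h
  have := nf_xg i
  rw [h, nf_one] at this
  simp at this

lemma nf_mul_xg_right {m : ℕ} (i : Fin m) (w : W m)
    (hne : ∀ b ∈ (nf w).1.getLast?, b ≠ i) :
    (nf (w * xg i)).1 = (nf w).1 ++ [i] := by
  have hch : ((nf w).1 ++ [i]).Chain' (· ≠ ·) :=
    isChain_append.mpr ⟨(nf w).2, isChain_singleton i, by
      intro a ha b hb
      simp only [head?_cons, Option.mem_some_iff] at hb
      subst hb
      exact hne a ha⟩
  have hrw : w * xg i = ev ((nf w).1 ++ [i]) := by
    rw [ev_append, ev_singleton, ev_nf]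
  rw [hrw, nf_ev _ hch]

lemma centralizer_aux {m : ℕ} (i : Fin m) :
    ∀ k, ∀ w : W m, (nf w).1.length = k → w * xg i = xg i * w → w = 1 ∨ w = xg i := by
  intro k
  induction k using Nat.strong_induction_on with
  | _ k ih =>
    intro w hk hw
    by_cases h0 : (nf w).1 = []
    · exact Or.inl (eq_one_of_nf h0)
    by_cases hli : (nf w).1.getLast h0 = i
    · -- last letter is i : peel it off and induct
      have hdec : (nf w).1.dropLast ++ [i] = (nf w).1 := by
        rw [← hli]; exact dropLast_append_getLast h0
      have hch2 : ((nf w).1.dropLast ++ [i]).Chain' (· ≠ ·) := by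
        rw [hdec]; exact (nf w).2
      have hch : (nf w).1.dropLast.Chain' (· ≠ ·) := (isChain_append.mp hch2).1
      have hw' : w = ev (nf w).1.dropLast * xg i := by
        conv_lhs => rw [← ev_nf w, ← hdec]
        rw [ev_append, ev_singleton]
      set w' := ev (nf w).1.dropLast with hw'def
      have hnf' : (nf w').1 = (nf w).1.dropLast := by rw [hw'def, nf_ev _ hch]
      have h2 : w' = xg i * w' * xg i := by
        have h1 : w' * xg i * xg i = xg i * (w' * xg i) := by rw [← hw']; exact hw
        rw [mul_assoc, xg_sq, mul_one] at h1
        rw [← mul_assoc] at h1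
        exact h1
      have hcomm : w' * xg i = xg i * w' := by
        calc w' * xg i = xg i * w' * xg i * xg i := by rw [← h2]
          _ = xg i * w' * (xg i * xg i) := by rw [mul_assoc]
          _ = xg i * w' := by rw [xg_sq, mul_one]
      have hlen : (nf w').1.length < k := by
        rw [hnf', ← hk, length_dropLast]
        have := length_pos_iff.mpr h0
        omega
      rcases ih _ hlen w' rfl hcomm with h | h
      · right
        rw [hw', h, one_mul]
      · left
        exfalso
        have : (nf w').1 = [i] := by rw [h]; exact nf_xg i
        rw [hnf'] at this
        have hll : (nf w).1 = [i, i] := by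
          rw [← hdec, this]
          rfl
        have := (nf w).2
        rw [hll] at this
        exact (isChain_cons_cons.mp this).1 rfl
    · -- last letter (if any) is not i : contradiction
      exfalso
      have hA : (nf (w * xg i)).1 = (nf w).1 ++ [i] := by
        apply nf_mul_xg_right
        intro b hb
        obtain ⟨hb1, hb2⟩ := mem_getLast?_eq_getLast hb
        rw [hb2]
        exact hli
      rw [hw] at hA
      rw [nf_mul_xg_left] at hA
      by_cases hh : (nf w).1.head? = some i
      · have hs : (sigma i (nf w)).1 = (nf w).1.tail := by
          rw [sigma_apply, sigFun]; exact congrArg Subtype.val (dif_pos hh)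
        rw [hs] at hA
        have := congrArg List.length hA
        rw [length_tail, length_append] at this
        have := length_pos_iff.mpr h0
        omega
      · have hs : (sigma i (nf w)).1 = i :: (nf w).1 := by
          rw [sigma_apply, sigFun]; exact congrArg Subtype.val (dif_neg hh)
        rw [hs] at hA
        obtain ⟨a, t, hat⟩ : ∃ a t, (nf w).1 = a :: t := by
          match (nf w).1, h0 with
          | a :: t, _ => exact ⟨a, t, rfl⟩
        rw [hat] at hA
        rw [cons_append] at hA
        have hia : i = a := by injection hA
        apply hh
        rw [hat, ← hia]
        rfl

lemma centralizer_xg {m : ℕ} (i : Fin m) (w : W m) (hw : w * xg i = xg i * w) :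
    w = 1 ∨ w = xg i :=
  centralizer_aux i _ w rfl hw

lemma involution_aux {m : ℕ} :
    ∀ k, ∀ t : W m, (nf t).1.length = k → t * t = 1 →
      t = 1 ∨ ∃ (j : Fin m) (g : W m), t = g * xg j * g⁻¹ := by
  intro k
  induction k using Nat.strong_induction_on with
  | _ k ih =>
    intro t hk ht
    by_cases h0 : (nf t).1 = []
    · exact Or.inl (eq_one_of_nf h0)
    obtain ⟨a, s, hcons⟩ : ∃ a s, (nf t).1 = a :: s := by
      match (nf t).1, h0 with
      | a :: s, _ => exact ⟨a, s, rfl⟩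
    by_cases h1 : s = []
    · right
      refine ⟨a, 1, ?_⟩
      have hteq : t = ev (nf t).1 := (ev_nf t).symm
      rw [hcons, h1, ev_singleton] at hteq
      rw [hteq]
      simp
    · by_cases hab : a = (nf t).1.getLast h0
      · -- cyclically non-reduced : conjugate and induct
        have hb := dropLast_append_getLast h0
        have hldne : (nf t).1.dropLast ≠ [] := by
          intro hemp
          rw [hemp, nil_append] at hb
          have hlb := congrArg List.length hb
          have hlc := congrArg List.length hcons
          rw [length_cons] at hlc
          rw [length_singleton, hlc] at hlb
          have : s.length = 0 := by omega
          exact h1 (length_eq_zero_iff.mp this)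
        obtain ⟨c, mid, hld⟩ : ∃ c mid, (nf t).1.dropLast = c :: mid := by
          match (nf t).1.dropLast, hldne with
          | c :: mid, _ => exact ⟨c, mid, rfl⟩
        have key : (c :: mid) ++ [(nf t).1.getLast h0] = a :: s := by
          rw [← hld, hb, hcons]
        rw [cons_append] at key
        injection key with hc hs
        have hchs : s.Chain' (· ≠ ·) := by
          have := (nf t).2
          rw [hcons] at this
          exact this.tail
        have hchmb : (mid ++ [(nf t).1.getLast h0]).Chain' (· ≠ ·) := by
          rw [hs]; exact hchs
        have hchmid : mid.Chain' (· ≠ ·) := (isChain_append.mp hchmb).1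
        have hT : t = xg a * (ev mid * xg a) := by
          conv_lhs => rw [← ev_nf t, ← hb, hld]
          rw [cons_append, ev_cons, ev_append, ev_singleton, hc, ← hab, ← mul_assoc,
            mul_assoc]
        set u := ev mid with hudef
        have hnfu : (nf u).1 = mid := by rw [hudef, nf_ev _ hchmid]
        have hu : u = xg a * t * xg a := by
          rw [hT, ← mul_assoc, ← mul_assoc, xg_sq, one_mul, mul_assoc, xg_sq, mul_one]
        have hu2 : u * u = 1 := by
          rw [hu]
          calc xg a * t * xg a * (xg a * t * xg a)
              = xg a * (t * ((xg a * xg a) * (t * xg a))) := by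
                simp only [mul_assoc]
            _ = xg a * ((t * t) * xg a) := by rw [xg_sq, one_mul, mul_assoc]
            _ = 1 := by rw [ht, one_mul, xg_sq]
        have hlen : (nf u).1.length < k := by
          have hsl := congrArg List.length hs
          rw [length_append] at hsl
          rw [hnfu, ← hk, hcons, length_cons, ← hsl]
          simp only [length_singleton]
          omega
        rcases ih _ hlen u rfl hu2 with h | ⟨j, g, hg⟩
        · left
          rw [hT, h, one_mul, xg_sq]
        · right
          refine ⟨j, xg a * g, ?_⟩
          rw [hT, hg, mul_inv_rev, xg_inv]
          simp only [mul_assoc]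
      · -- cyclically reduced of length ≥ 2 : t * t ≠ 1
        exfalso
        have hch2 : ((nf t).1 ++ (nf t).1).Chain' (· ≠ ·) := by
          apply isChain_append.mpr
          refine ⟨(nf t).2, (nf t).2, ?_⟩
          intro p hp q hq
          obtain ⟨hp1, hp2⟩ := mem_getLast?_eq_getLast hp
          have hq' : q = a := by
            rw [hcons] at hq
            simp only [head?_cons, Option.mem_some_iff] at hq
            exact hq.symm
          rw [hp2, hq']
          intro he
          exact hab (he.symm)
        have hnf2 : nf (t * t) = ⟨(nf t).1 ++ (nf t).1, hch2⟩ := by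
          have : t * t = ev ((nf t).1 ++ (nf t).1) := by
            rw [ev_append, ev_nf]
          rw [this, nf_ev _ hch2]
        rw [ht] at hnf2
        have : ([] : List (Fin m)) = (nf t).1 ++ (nf t).1 := by
          rw [← nf_one]
          exact congrArg Subtype.val hnf2
        rw [hcons] at this
        simp at this

lemma involution_conj {m : ℕ} (t : W m) (ht : t * t = 1) :
    t = 1 ∨ ∃ (j : Fin m) (g : W m), t = g * xg j * g⁻¹ :=
  involution_aux _ t rfl ht

def iota {n : ℕ} : W n →* W (n + 1) :=
  PresentedGroup.toGroup (f := fun i => xg i.castSucc) (by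
    rintro r ⟨i, rfl⟩
    rw [map_pow, FreeGroup.lift_apply_of, pow_two]
    exact xg_sq _)

lemma iota_xg {n : ℕ} (i : Fin n) : iota (xg i) = xg i.castSucc :=
  PresentedGroup.toGroup.of _

lemma chain_map_castSucc {n : ℕ} (l : List (Fin n)) (h : l.Chain' (· ≠ ·)) :
    (l.map Fin.castSucc).Chain' (· ≠ ·) := by
  refine (isChain_map _).mpr ?_
  exact h.imp (fun a b hab => by simpa [Fin.castSucc_inj] using hab)

lemma sig_map {n : ℕ} (i : Fin n) (t : Red n) (h : (t.1.map Fin.castSucc).Chain' (· ≠ ·)) :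
    (sigma i.castSucc ⟨t.1.map Fin.castSucc, h⟩).1 = ((sigma i t).1).map Fin.castSucc := by
  rcases t with ⟨l, hl⟩
  by_cases hh : l.head? = some i
  · have hh2 : (l.map Fin.castSucc).head? = some i.castSucc := by
      rw [head?_map, hh]
      rfl
    have e1 : sigma i.castSucc ⟨l.map Fin.castSucc, h⟩ = ⟨(l.map Fin.castSucc).tail, _⟩ :=
      dif_pos hh2
    have e2 : sigma i ⟨l, hl⟩ = ⟨l.tail, _⟩ := dif_pos hh
    rw [e1, e2]
    cases l <;> simp
  · have hh2 : ¬(l.map Fin.castSucc).head? = some i.castSucc := by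
      rw [head?_map]
      intro hcon
      match l, hcon with
      | a :: t', hcon =>
        have : a.castSucc = i.castSucc := by simpa using hcon
        exact hh (by simp [Fin.castSucc_inj.mp this])
    have e1 : sigma i.castSucc ⟨l.map Fin.castSucc, h⟩ = ⟨i.castSucc :: l.map Fin.castSucc, _⟩ :=
      dif_neg hh2
    have e2 : sigma i ⟨l, hl⟩ = ⟨i :: l, _⟩ := dif_neg hh
    rw [e1, e2]
    simp

lemma nf_iota {n : ℕ} (w : W n) : (nf (iota w)).1 = (nf w).1.map Fin.castSucc := by
  have hw : w ∈ Subgroup.closure (Set.range (PresentedGroup.of : Fin n → W n)) := by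
    rw [PresentedGroup.closure_range_of]; trivial
  induction hw using Subgroup.closure_induction_left with
  | one => simp [nf_one]
  | mul_left a ha y hy ih =>
    obtain ⟨i, rfl⟩ := ha
    have hofx : (PresentedGroup.of i : W n) = xg i := rfl
    rw [hofx, map_mul, iota_xg, nf_mul_xg_left, nf_mul_xg_left]
    have hch : ((nf y).1.map Fin.castSucc).Chain' (· ≠ ·) :=
      chain_map_castSucc _ (nf y).2
    have hrw : nf (iota y) = ⟨(nf y).1.map Fin.castSucc, hch⟩ := Subtype.ext ih
    rw [hrw, sig_map]
  | inv_mul_cancel a ha y hy ih =>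
    obtain ⟨i, rfl⟩ := ha
    have hofx : (PresentedGroup.of i : W n)⁻¹ = xg i := xg_inv i
    rw [hofx, map_mul, iota_xg, nf_mul_xg_left, nf_mul_xg_left]
    have hch : ((nf y).1.map Fin.castSucc).Chain' (· ≠ ·) :=
      chain_map_castSucc _ (nf y).2
    have hrw : nf (iota y) = ⟨(nf y).1.map Fin.castSucc, hch⟩ := Subtype.ext ih
    rw [hrw, sig_map]

lemma iota_inj {n : ℕ} : Function.Injective (iota (n := n)) := by
  intro u v h
  have h2 : (nf u).1.map Fin.castSucc = (nf v).1.map Fin.castSucc := by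
    rw [← nf_iota, ← nf_iota, h]
  have h3 : (nf u).1 = (nf v).1 :=
    (List.map_injective_iff.mpr (Fin.castSucc_injective n)) h2
  rw [← ev_nf u, ← ev_nf v, h3]

lemma conj_last_not_in_range {n : ℕ} (v u : W n) (hv : v ≠ 1)
    (he : xg (Fin.last n) * iota v * xg (Fin.last n) = iota u) : False := by
  have hne : (nf v).1 ≠ [] := fun h => hv (eq_one_of_nf h)
  have hmem : ∀ b ∈ (nf v).1.map Fin.castSucc, b ≠ Fin.last n := by
    intro b hb
    obtain ⟨j, _, rfl⟩ := mem_map.mp hb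
    exact (Fin.castSucc_lt_last j).ne
  have hch1 : ((nf v).1.map Fin.castSucc ++ [Fin.last n]).Chain' (· ≠ ·) := by
    apply isChain_append.mpr
    refine ⟨chain_map_castSucc _ (nf v).2, isChain_singleton _, ?_⟩
    intro p hp q hq
    simp only [head?_cons, Option.mem_some_iff] at hq
    subst hq
    obtain ⟨hp1, hp2⟩ := mem_getLast?_eq_getLast hp
    rw [hp2]
    exact hmem _ (getLast_mem hp1)
  have hch : (Fin.last n :: ((nf v).1.map Fin.castSucc ++ [Fin.last n])).Chain' (· ≠ ·) := by
    apply isChain_cons.mpr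
    refine ⟨?_, hch1⟩
    intro y hy
    have hyne : (nf v).1.map Fin.castSucc ≠ [] := by
      intro hcon
      exact hne (map_eq_nil_iff.mp hcon)
    have : y ∈ (nf v).1.map Fin.castSucc := by
      match hl : (nf v).1.map Fin.castSucc, hyne with
      | c :: rest, _ =>
        rw [hl] at hy
        simp only [cons_append, head?_cons, Option.mem_some_iff] at hy
        subst hy
        exact mem_cons_self
    exact (hmem y this).symm
  have hev : xg (Fin.last n) * iota v * xg (Fin.last n)
      = ev (Fin.last n :: ((nf v).1.map Fin.castSucc ++ [Fin.last n])) := by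
    rw [ev_cons, ev_append, ev_singleton]
    have : ev ((nf v).1.map Fin.castSucc) = iota v := by
      rw [← nf_iota, ev_nf]
    rw [this, mul_assoc]
  have h2 : (nf (iota u)).1
      = Fin.last n :: ((nf v).1.map Fin.castSucc ++ [Fin.last n]) := by
    rw [← he, hev, nf_ev _ hch]
  rw [nf_iota] at h2
  have : Fin.last n ∈ (nf u).1.map Fin.castSucc := by
    rw [h2]
    exact mem_cons_self
  obtain ⟨j, _, hj⟩ := mem_map.mp this
  exact (Fin.castSucc_lt_last j).ne hj

def extAut {n : ℕ} (φ : MulAut (W n)) : W (n + 1) →* W (n + 1) :=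
  PresentedGroup.toGroup
    (f := fun j => Fin.lastCases (xg (Fin.last n)) (fun i => iota (φ (xg i))) j) (by
      rintro r ⟨j, rfl⟩
      rw [map_pow, FreeGroup.lift_apply_of, pow_two]
      induction j using Fin.lastCases with
      | last =>
        rw [Fin.lastCases_last]
        exact xg_sq _
      | cast i =>
        rw [Fin.lastCases_castSucc]
        rw [← map_mul, ← map_mul, xg_sq, map_one, map_one])

lemma extAut_last {n : ℕ} (φ : MulAut (W n)) : extAut φ (xg (Fin.last n)) = xg (Fin.last n) := by
  have : extAut φ (PresentedGroup.of (Fin.last n)) = _ := PresentedGroup.toGroup.of _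
  rw [show (xg (Fin.last n) : W (n+1)) = PresentedGroup.of (Fin.last n) from rfl, this,
    Fin.lastCases_last]
  rfl

lemma extAut_castSucc {n : ℕ} (φ : MulAut (W n)) (i : Fin n) :
    extAut φ (xg i.castSucc) = iota (φ (xg i)) := by
  have : extAut φ (PresentedGroup.of i.castSucc) = _ := PresentedGroup.toGroup.of _
  rw [show (xg i.castSucc : W (n+1)) = PresentedGroup.of i.castSucc from rfl, this,
    Fin.lastCases_castSucc]

lemma extAut_iota {n : ℕ} (φ : MulAut (W n)) (w : W n) :
    extAut φ (iota w) = iota (φ w) := by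
  have hcomp : (extAut φ).comp iota = iota.comp φ.toMonoidHom := by
    apply PresentedGroup.ext
    intro i
    have hofx : (PresentedGroup.of i : W n) = xg i := rfl
    simp only [MonoidHom.comp_apply, hofx]
    rw [iota_xg, extAut_castSucc]
    rfl
  exact DFunLike.congr_fun hcomp w

lemma extAut_comp {n : ℕ} (φ ψ : MulAut (W n)) :
    (extAut φ).comp (extAut ψ) = extAut (φ * ψ) := by
  apply PresentedGroup.ext
  intro j
  induction j using Fin.lastCases with
  | last =>
    have hofx : (PresentedGroup.of (Fin.last n) : W (n+1)) = xg (Fin.last n) := rfl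
    simp only [MonoidHom.comp_apply, hofx]
    rw [extAut_last, extAut_last, extAut_last]
  | cast i =>
    have hofx : (PresentedGroup.of i.castSucc : W (n+1)) = xg i.castSucc := rfl
    simp only [MonoidHom.comp_apply, hofx]
    rw [extAut_castSucc, extAut_iota, extAut_castSucc, MulAut.mul_apply]

lemma extAut_one {n : ℕ} : extAut (1 : MulAut (W n)) = MonoidHom.id (W (n + 1)) := by
  apply PresentedGroup.ext
  intro j
  induction j using Fin.lastCases with
  | last =>
    have hofx : (PresentedGroup.of (Fin.last n) : W (n+1)) = xg (Fin.last n) := rfl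
    simp only [MonoidHom.comp_apply, hofx, MonoidHom.id_apply]
    rw [extAut_last]
  | cast i =>
    have hofx : (PresentedGroup.of i.castSucc : W (n+1)) = xg i.castSucc := rfl
    simp only [MonoidHom.comp_apply, hofx, MonoidHom.id_apply]
    rw [extAut_castSucc]
    simp [iota_xg]

def FAut0 {n : ℕ} (φ : MulAut (W n)) : MulAut (W (n + 1)) where
  toFun := extAut φ
  invFun := extAut φ⁻¹
  left_inv := fun w => by
    calc extAut φ⁻¹ (extAut φ w) = ((extAut φ⁻¹).comp (extAut φ)) w := rfl
      _ = extAut (φ⁻¹ * φ) w := by rw [extAut_comp]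
      _ = w := by rw [inv_mul_cancel, extAut_one, MonoidHom.id_apply]
  right_inv := fun w => by
    calc extAut φ (extAut φ⁻¹ w) = ((extAut φ).comp (extAut φ⁻¹)) w := rfl
      _ = extAut (φ * φ⁻¹) w := by rw [extAut_comp]
      _ = w := by rw [mul_inv_cancel, extAut_one, MonoidHom.id_apply]
  map_mul' := map_mul (extAut φ)

def FAut {n : ℕ} : MulAut (W n) →* MulAut (W (n + 1)) :=
  MonoidHom.mk' FAut0 (by
    intro φ ψ
    apply MulEquiv.ext
    intro w
    show extAut (φ * ψ) w = extAut φ (extAut ψ w)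
    rw [← extAut_comp]
    rfl)

lemma FAut_apply {n : ℕ} (φ : MulAut (W n)) (w : W (n + 1)) :
    FAut φ w = extAut φ w := rfl

lemma outProj_FAut_inj {n : ℕ} (hn : 1 ≤ n) :
    Function.Injective ((outProj (W (n + 1))).comp (FAut (n := n))) := by
  rw [injective_iff_map_eq_one]
  intro φ hφ
  have hmem : FAut φ ∈ Inn (W (n + 1)) := by
    have : (QuotientGroup.mk' (Inn (W (n+1)))) (FAut φ) = 1 := hφ
    exact (QuotientGroup.eq_one_iff _).mp this
  obtain ⟨g, hg⟩ := hmem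
  have h1 : g * xg (Fin.last n) * g⁻¹ = xg (Fin.last n) := by
    have := MulEquiv.ext_iff.mp hg (xg (Fin.last n))
    rw [MulAut.conj_apply] at this
    rw [this, FAut_apply, extAut_last]
  have h2 : g * xg (Fin.last n) = xg (Fin.last n) * g := by
    have := congrArg (fun z => z * g) h1
    simpa [mul_assoc] using this
  set i0 : Fin n := ⟨0, hn⟩
  rcases centralizer_xg (Fin.last n) g h2 with hg1 | hg1
  · -- g = 1 : φ is the identity
    subst hg1
    have hFone : FAut φ = 1 := by
      rw [← hg]
      apply MulEquiv.ext
      intro w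
      simp [MulAut.conj_apply]
    have hgen : ∀ i : Fin n, φ (xg i) = xg i := by
      intro i
      apply iota_inj
      have : FAut φ (xg i.castSucc) = xg i.castSucc := by rw [hFone]; rfl
      rw [FAut_apply, extAut_castSucc] at this
      rw [this, iota_xg]
    apply MulEquiv.ext
    intro w
    have hhom : φ.toMonoidHom = MonoidHom.id (W n) := by
      apply PresentedGroup.ext
      intro i
      have hofx : (PresentedGroup.of i : W n) = xg i := rfl
      simp only [MonoidHom.comp_apply, hofx, MonoidHom.id_apply]
      exact hgen i
    calc φ w = φ.toMonoidHom w := rfl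
      _ = w := by rw [hhom]; rfl
  · -- g = xg last : impossible
    exfalso
    subst hg1
    have hx := MulEquiv.ext_iff.mp hg (iota (xg i0))
    rw [MulAut.conj_apply, xg_inv, FAut_apply, extAut_iota] at hx
    exact conj_last_not_in_range (xg i0) (φ (xg i0)) (xg_ne_one i0) hx
/-! ### A finite characteristic quotient -/

abbrev P3 := Equiv.Perm (Fin 3)

def evalHom (n : ℕ) : W n →* ((W n →* P3) → P3) where
  toFun w := fun f => f w
  map_one' := by funext f; simp
  map_mul' := fun a b => by funext f; simp

def NN (n : ℕ) : Subgroup (W n) := (evalHom n).ker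

instance NN_normal (n : ℕ) : (NN n).Normal := MonoidHom.normal_ker _

lemma mem_NN {n : ℕ} {w : W n} : w ∈ NN n ↔ ∀ f : W n →* P3, f w = 1 := by
  constructor
  · intro h f
    have h1 : evalHom n w = 1 := h
    exact congrFun h1 f
  · intro h
    show evalHom n w = 1
    funext f
    exact h f

lemma finite_homs (n : ℕ) : Finite (W n →* P3) := by
  have hinj : Function.Injective (fun f : W n →* P3 => (fun i : Fin n => f (xg i))) := by
    intro f g h
    apply PresentedGroup.ext
    intro i
    exact congrFun h i
  exact Finite.of_injective _ hinj

lemma finite_quot_NN (n : ℕ) : Finite (W n ⧸ NN n) := by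
  haveI := finite_homs n
  haveI : Finite ((W n →* P3) → P3) := Pi.finite
  exact Finite.of_equiv _ (QuotientGroup.quotientKerEquivRange (evalHom n)).toEquiv.symm

lemma NN_char {n : ℕ} (φ : MulAut (W n)) : (NN n).map ↑φ = NN n := by
  apply _root_.le_antisymm
  · rintro _ ⟨w, hw, rfl⟩
    exact mem_NN.mpr fun f => mem_NN.mp hw (f.comp (φ : W n →* W n))
  · intro w hw
    exact ⟨φ.symm w, mem_NN.mpr fun f => mem_NN.mp hw (f.comp (φ.symm : W n →* W n)), by simp⟩

def cAut (n : ℕ) : MulAut (W n) →* MulAut (W n ⧸ NN n) :=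
  MonoidHom.mk' (fun φ => QuotientGroup.congr (NN n) (NN n) φ (NN_char φ)) (by
    intro φ ψ
    apply MulEquiv.ext
    intro w
    induction w using QuotientGroup.induction_on with
    | _ z =>
      show QuotientGroup.congr (NN n) (NN n) (φ * ψ) (NN_char _) (QuotientGroup.mk z)
        = QuotientGroup.congr (NN n) (NN n) φ (NN_char _)
            (QuotientGroup.congr (NN n) (NN n) ψ (NN_char _) (QuotientGroup.mk z))
      rw [QuotientGroup.congr_mk, QuotientGroup.congr_mk, QuotientGroup.congr_mk]
      rfl)

lemma cAut_mk {n : ℕ} (φ : MulAut (W n)) (z : W n) :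
    cAut n φ (QuotientGroup.mk z) = QuotientGroup.mk (φ z) :=
  QuotientGroup.congr_mk (NN n) (NN n) φ (NN_char φ) z

lemma finite_quot_ker_cAut (n : ℕ) : Finite (MulAut (W n) ⧸ (cAut n).ker) := by
  haveI : Finite (W n ⧸ NN n) := finite_quot_NN n
  haveI : Finite (MulAut (W n ⧸ NN n)) := by
    refine Finite.of_injective (fun e : MulAut (W n ⧸ NN n) => (e : W n ⧸ NN n → W n ⧸ NN n)) ?_
    intro a b h
    apply MulEquiv.ext
    intro z
    exact congrFun h z
  exact Finite.of_equiv _ (QuotientGroup.quotientKerEquivRange (cAut n)).toEquiv.symm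

lemma cAut_conj_ne_one {n : ℕ} (h2 : 2 ≤ n) :
    cAut n (MulAut.conj (xg (⟨0, by omega⟩ : Fin n))) ≠ 1 := by
  set i0 : Fin n := ⟨0, by omega⟩ with hi0
  set i1 : Fin n := ⟨1, by omega⟩ with hi1
  have hne : i1 ≠ i0 := by simp [hi0, hi1, Fin.ext_iff]
  set f0 : W n →* P3 := PresentedGroup.toGroup
    (f := fun i => if i = i0 then Equiv.swap 0 1 else if i = i1 then Equiv.swap 0 2 else 1) (by
      rintro r ⟨i, rfl⟩
      rw [map_pow, FreeGroup.lift_apply_of, pow_two]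
      by_cases h : i = i0
      · simp [h, Equiv.swap_mul_self]
      · by_cases h' : i = i1
        · simp [h', hne, Equiv.swap_mul_self]
        · simp [h, h']) with hf0def
  have hf00 : f0 (xg i0) = Equiv.swap 0 1 := by
    have : f0 (PresentedGroup.of i0) = _ := PresentedGroup.toGroup.of _
    rw [show (xg i0 : W n) = PresentedGroup.of i0 from rfl, this, if_pos rfl]
  have hf01 : f0 (xg i1) = Equiv.swap 0 2 := by
    have : f0 (PresentedGroup.of i1) = _ := PresentedGroup.toGroup.of _
    rw [show (xg i1 : W n) = PresentedGroup.of i1 from rfl, this, if_neg hne, if_pos rfl]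
  intro hcon
  have h1 : cAut n (MulAut.conj (xg i0)) (QuotientGroup.mk (xg i1))
      = QuotientGroup.mk (xg i1) := by rw [hcon]; rfl
  rw [cAut_mk, MulAut.conj_apply, xg_inv] at h1
  have h2' : (xg i0 * xg i1 * xg i0)⁻¹ * xg i1 ∈ NN n := (QuotientGroup.eq).mp h1
  have h3 := mem_NN.mp h2' f0
  rw [map_mul, map_inv, map_mul, map_mul, hf00, hf01] at h3
  have h4 := congrArg (fun (e : P3) => e 0) h3
  simp only [Equiv.Perm.mul_apply] at h4
  rw [show ((1 : P3) 0) = 0 from rfl] at h4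
  revert h4
  decide

lemma conj_xg_eq_one_of_n1 {n : ℕ} (h1 : n = 1) (i : Fin n) : MulAut.conj (xg i) = 1 := by
  subst h1
  apply MulEquiv.ext
  intro w
  rw [MulAut.conj_apply, xg_inv]
  show xg i * w * xg i = w
  have hw : w = 1 ∨ w = xg i := by
    rcases hl : (nf w).1 with _ | ⟨a, t⟩
    · left; exact eq_one_of_nf hl
    · have ht : t = [] := by
        cases t with
        | nil => rfl
        | cons b t' =>
          exfalso
          have hch := (nf w).2
          rw [hl] at hch
          exact (isChain_cons_cons.mp hch).1 (Subsingleton.elim a b)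
      right
      have : w = ev (nf w).1 := (ev_nf w).symm
      rw [this, hl, ht, ev_singleton, Subsingleton.elim a i]
  rcases hw with h | h
  · rw [h, mul_one, xg_sq]
  · rw [h, xg_sq, one_mul]

/-! ### The action of `Out` on conjugacy classes -/

lemma conjClasses_map_mk {G H : Type*} [Group G] [Group H] (f : G →* H) (a : G) :
    ConjClasses.map f (ConjClasses.mk a) = ConjClasses.mk (f a) := rfl

def thetaAut {n : ℕ} (φ : MulAut (W n)) : Equiv.Perm (ConjClasses (W n)) where
  toFun := ConjClasses.map φ.toMonoidHom
  invFun := ConjClasses.map φ.symm.toMonoidHom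
  left_inv := by
    intro c
    obtain ⟨a, rfl⟩ := ConjClasses.mk_surjective c
    rw [conjClasses_map_mk, conjClasses_map_mk]
    simp
  right_inv := by
    intro c
    obtain ⟨a, rfl⟩ := ConjClasses.mk_surjective c
    rw [conjClasses_map_mk, conjClasses_map_mk]
    simp

def thetaHom (n : ℕ) : MulAut (W n) →* Equiv.Perm (ConjClasses (W n)) :=
  MonoidHom.mk' thetaAut (by
    intro φ ψ
    apply Equiv.ext
    intro c
    obtain ⟨a, rfl⟩ := ConjClasses.mk_surjective c
    rfl)

lemma Inn_le_ker_theta (n : ℕ) : Inn (W n) ≤ (thetaHom n).ker := by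
  rintro _ ⟨g, rfl⟩
  show thetaAut (MulAut.conj g) = 1
  apply Equiv.ext
  intro c
  obtain ⟨a, rfl⟩ := ConjClasses.mk_surjective c
  show ConjClasses.mk (MulAut.conj g a) = ConjClasses.mk a
  rw [ConjClasses.mk_eq_mk_iff_isConj, MulAut.conj_apply]
  apply isConj_iff.mpr
  exact ⟨g⁻¹, by simp [mul_assoc]⟩

def thetaOut (n : ℕ) : Out (W n) →* Equiv.Perm (ConjClasses (W n)) :=
  QuotientGroup.lift (Inn (W n)) (thetaHom n) (fun x hx => Inn_le_ker_theta n hx)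

noncomputable instance outConjAction (n : ℕ) :
    MulAction (Out (W n)) (ConjClasses (W n)) :=
  MulAction.compHom _ (thetaOut n)

lemma out_smul_mk {n : ℕ} (φ : MulAut (W n)) (a : W n) :
    (outProj (W n) φ) • ConjClasses.mk a = ConjClasses.mk (φ a) := rfl

/-! ### Assembly -/

lemma outProj_surjective (n : ℕ) : Function.Surjective (outProj (W n)) :=
  QuotientGroup.mk'_surjective _

lemma outProj_conj_eq_one {n : ℕ} (u : W n) : outProj (W n) (MulAut.conj u) = 1 :=
  (QuotientGroup.eq_one_iff _).mpr ⟨u, rfl⟩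

def Astab (n : ℕ) (hn : 1 ≤ n) : Subgroup (MulAut (W n)) :=
  MulAction.stabilizer (MulAut (W n)) (xg ⟨0, hn⟩)

def Agood (n : ℕ) (hn : 1 ≤ n) : Subgroup (MulAut (W n)) :=
  Astab n hn ⊓ (cAut n).ker

def Obig (n : ℕ) (hn : 1 ≤ n) : Subgroup (Out (W n)) :=
  (Agood n hn).map (outProj (W n))

noncomputable def O1 (n : ℕ) (hn : 1 ≤ n) : Subgroup (Out (W n)) :=
  MulAction.stabilizer (Out (W n)) (ConjClasses.mk (xg ⟨0, hn⟩))

lemma O1_le (n : ℕ) (hn : 1 ≤ n) : O1 n hn ≤ (Astab n hn).map (outProj (W n)) := by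
  intro ω hω
  obtain ⟨φ, rfl⟩ := outProj_surjective n ω
  have hω' : ConjClasses.mk (φ (xg (⟨0, hn⟩ : Fin n))) = ConjClasses.mk (xg (⟨0, hn⟩ : Fin n)) := by
    rw [← out_smul_mk φ (xg (⟨0, hn⟩ : Fin n))]
    exact MulAction.mem_stabilizer_iff.mp hω
  obtain ⟨u, hu⟩ := isConj_iff.mp (ConjClasses.mk_eq_mk_iff_isConj.mp hω')
  refine ⟨MulAut.conj u * φ, ?_, ?_⟩
  · show (MulAut.conj u * φ) • (xg (⟨0, hn⟩ : Fin n)) = xg (⟨0, hn⟩ : Fin n)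
    show (MulAut.conj u * φ) (xg (⟨0, hn⟩ : Fin n)) = xg (⟨0, hn⟩ : Fin n)
    rw [MulAut.mul_apply, MulAut.conj_apply]
    exact hu
  · rw [map_mul, outProj_conj_eq_one, one_mul]

lemma map_le_O1 (n : ℕ) (hn : 1 ≤ n) : (Astab n hn).map (outProj (W n)) ≤ O1 n hn := by
  rintro _ ⟨φ, hφ, rfl⟩
  have hfix : φ (xg (⟨0, hn⟩ : Fin n)) = xg (⟨0, hn⟩ : Fin n) := hφ
  show (outProj (W n) φ) • ConjClasses.mk (xg (⟨0, hn⟩ : Fin n)) = ConjClasses.mk (xg (⟨0, hn⟩ : Fin n))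
  rw [out_smul_mk, hfix]

lemma Obig_le_O1 (n : ℕ) (hn : 1 ≤ n) : Obig n hn ≤ O1 n hn :=
  le_trans (Subgroup.map_mono inf_le_left) (map_le_O1 n hn)

lemma O1_finiteIndex (n : ℕ) (hn : 1 ≤ n) : (O1 n hn).FiniteIndex := by
  have horb : MulAction.orbit (Out (W n)) (ConjClasses.mk (xg (⟨0, hn⟩ : Fin n)))
      ⊆ Set.range (fun j : Fin n => ConjClasses.mk (xg j)) := by
    rintro _ ⟨ω, rfl⟩
    obtain ⟨φ, rfl⟩ := outProj_surjective n ω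
    have hsq : φ (xg (⟨0, hn⟩ : Fin n)) * φ (xg (⟨0, hn⟩ : Fin n)) = 1 := by
      rw [← map_mul, xg_sq, map_one]
    rcases involution_conj _ hsq with h1 | ⟨j, g, hj⟩
    · exact absurd (φ.injective (by rw [h1, map_one])) (xg_ne_one _)
    · refine ⟨j, ?_⟩
      show ConjClasses.mk (xg j)
        = (outProj (W n) φ) • ConjClasses.mk (xg (⟨0, hn⟩ : Fin n))
      rw [out_smul_mk, ConjClasses.mk_eq_mk_iff_isConj]
      exact isConj_iff.mpr ⟨g, hj.symm⟩
  have hfin : (MulAction.orbit (Out (W n)) (ConjClasses.mk (xg (⟨0, hn⟩ : Fin n)))).Finite :=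
    Set.Finite.subset (Set.finite_range _) horb
  haveI := hfin.to_subtype
  haveI : Finite (Out (W n) ⧸ O1 n hn) :=
    Finite.of_equiv _ (MulAction.orbitEquivQuotientStabilizer (Out (W n))
      (ConjClasses.mk (xg (⟨0, hn⟩ : Fin n))))
  exact Subgroup.finiteIndex_of_finite_quotient

lemma finite_relquot (n : ℕ) (hn : 1 ≤ n) :
    Finite (↥(O1 n hn) ⧸ (Obig n hn).subgroupOf (O1 n hn)) := by
  haveI hfin1 : Finite (MulAut (W n) ⧸ (cAut n).ker) := finite_quot_ker_cAut n
  let jmap : (↥(Astab n hn) ⧸ (Agood n hn).subgroupOf (Astab n hn)) →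
      (MulAut (W n) ⧸ (cAut n).ker) :=
    Quotient.map' Subtype.val (by
      intro a b hab
      rw [QuotientGroup.leftRel_apply] at hab ⊢
      exact (Subgroup.mem_subgroupOf.mp hab).2)
  have hjinj : Function.Injective jmap := by
    intro y z
    refine Quotient.inductionOn₂' y z ?_
    intro a b h
    have h2 := Quotient.exact' h
    rw [QuotientGroup.leftRel_apply] at h2
    apply Quotient.sound'
    rw [QuotientGroup.leftRel_apply]
    exact Subgroup.mem_subgroupOf.mpr
      (Subgroup.mem_inf.mpr ⟨Subgroup.mul_mem _ (Subgroup.inv_mem _ a.2) b.2, h2⟩)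
  let qmap : (↥(Astab n hn) ⧸ (Agood n hn).subgroupOf (Astab n hn)) →
      (↥(O1 n hn) ⧸ (Obig n hn).subgroupOf (O1 n hn)) :=
    Quotient.map'
      (fun a => (⟨outProj (W n) ↑a, map_le_O1 n hn ⟨↑a, a.2, rfl⟩⟩ : ↥(O1 n hn)))
      (by
        intro a b hab
        rw [QuotientGroup.leftRel_apply] at hab ⊢
        apply Subgroup.mem_subgroupOf.mpr
        show (outProj (W n) ↑a)⁻¹ * outProj (W n) ↑b ∈ Obig n hn
        rw [← map_inv, ← map_mul]
        exact Subgroup.mem_map_of_mem _ (Subgroup.mem_subgroupOf.mp hab))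
  have hqsurj : Function.Surjective qmap := by
    intro y
    refine Quotient.inductionOn' y ?_
    intro o
    obtain ⟨φ, hφ, heq⟩ := O1_le n hn o.2
    refine ⟨Quotient.mk'' ⟨φ, hφ⟩, ?_⟩
    show Quotient.mk'' _ = Quotient.mk'' o
    congr 1
    exact Subtype.ext heq
  haveI : Finite (↥(Astab n hn) ⧸ (Agood n hn).subgroupOf (Astab n hn)) :=
    Finite.of_injective jmap hjinj
  exact Finite.of_surjective qmap hqsurj

lemma Obig_finiteIndex (n : ℕ) (hn : 1 ≤ n) : (Obig n hn).FiniteIndex := by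
  constructor
  rw [← Subgroup.relIndex_mul_index (Obig_le_O1 n hn)]
  apply Nat.mul_ne_zero
  · haveI := finite_relquot n hn
    exact Subgroup.index_ne_zero_of_finite
  · exact (O1_finiteIndex n hn).index_ne_zero

lemma ker_lemma (n : ℕ) (hn : 1 ≤ n) :
    ∀ φ : MulAut (W n), φ ∈ Agood n hn → outProj (W n) φ = 1 → φ = 1 := by
  intro φ hφ h1
  have hInn : φ ∈ Inn (W n) := (QuotientGroup.eq_one_iff φ).mp h1
  obtain ⟨g, rfl⟩ := hInn
  have hst : MulAut.conj g (xg (⟨0, hn⟩ : Fin n)) = xg (⟨0, hn⟩ : Fin n) := hφ.1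
  rw [MulAut.conj_apply] at hst
  have hcomm : g * xg (⟨0, hn⟩ : Fin n) = xg (⟨0, hn⟩ : Fin n) * g := by
    have := congrArg (fun z => z * g) hst
    simpa [mul_assoc] using this
  rcases centralizer_xg _ g hcomm with h | h
  · rw [h]
    simp
  · rcases Nat.lt_or_ge n 2 with hlt | hge
    · have hn1 : n = 1 := by omega
      rw [h]
      exact conj_xg_eq_one_of_n1 hn1 _
    · exfalso
      have hker := hφ.2
      rw [h] at hker
      exact cAut_conj_ne_one hge hker

end S19

/-- `Out(W_n)` virtually embeds in `Out(W_{n+1})`. -/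
theorem statement19 (n : ℕ) (hn : 1 ≤ n) :
    ∃ O : Subgroup (Out (UniversalCoxeterGroup n)), O.FiniteIndex ∧
      ∃ φ : ↥O →* Out (UniversalCoxeterGroup (n + 1)), Function.Injective φ := by
  refine ⟨S19.Obig n hn, S19.Obig_finiteIndex n hn, ?_⟩
  let pr : ↥(S19.Agood n hn) →* ↥(S19.Obig n hn) :=
    ((outProj (S19.W n)).comp (S19.Agood n hn).subtype).codRestrict (S19.Obig n hn)
      (fun a => Subgroup.mem_map_of_mem _ a.2)
  have hprbij : Function.Bijective pr := by
    constructor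
    · rw [injective_iff_map_eq_one]
      intro a ha
      have h1 : outProj (S19.W n) ↑a = 1 := by
        have := Subtype.ext_iff.mp ha
        exact this
      exact Subtype.ext (S19.ker_lemma n hn ↑a a.2 h1)
    · rintro ⟨y, hy⟩
      obtain ⟨φ, hφ, rfl⟩ := hy
      exact ⟨⟨φ, hφ⟩, rfl⟩
  let e := MulEquiv.ofBijective pr hprbij
  refine ⟨(((outProj (S19.W (n+1))).comp S19.FAut).comp
    (S19.Agood n hn).subtype).comp e.symm.toMonoidHom, ?_⟩
  exact ((S19.outProj_FAut_inj hn).comp Subtype.val_injective).comp e.symm.injective
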